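/- Necessary condition for a Condorcet winner given a position matrix: let X be an m×m nonnegative-integer position matrix with all row and column sums equal to n, and suppose there exists an election E with n voters realizing X in which candidate c (a column index) is a Condorcet winner. Then for every i ∈ {1,...,m} and every subset S of column indices with c ∉ S: Σ_{j∈S} Σ_{k=1}^{i} X_{k,j} ≤ |S|·⌊(n−1)/2⌋ + Σ_{k=1}^{i−1} X_{k,c}·min(|S|, i−k). -/

import Mathlib

/-- `c` is a Condorcet winner: for every other candidate `d`, strictly more than half
of the voters rank `c` at an earlier (smaller) position than `d`. Votes map positions
to candidates, so the position of candidate `c` in vote `v` is `v.symm c`. -/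
def CondorcetWinner (m : ℕ) (votes : Multiset (Equiv.Perm (Fin m))) (c : Fin m) : Prop :=
  ∀ d : Fin m, d ≠ c →
    Multiset.card votes < 2 * (votes.filter (fun v => v.symm c < v.symm d)).card

private lemma card_filter_mem' {α β : Type*} [DecidableEq β] (s : Multiset α) (f : α → β)
    (T : Finset β) :
    (s.filter (fun a => f a ∈ T)).card = ∑ k ∈ T, (s.filter (fun a => f a = k)).card := by
  induction s using Multiset.induction_on with
  | empty => simp
  | cons a s ih =>
    simp only [← Multiset.countP_eq_card_filter, Multiset.countP_cons] at *
    rw [Finset.sum_add_distrib, ← ih]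
    congr 1
    simp [Finset.sum_ite_eq]

private lemma sum_card_filter' {α β : Type*} (s : Multiset α) (T : Finset β)
    (p : β → α → Prop) [∀ j, DecidablePred (p j)] [∀ a, DecidablePred (fun j => p j a)] :
    ∑ j ∈ T, (s.filter (p j)).card
      = (s.map (fun a => (T.filter (fun j => p j a)).card)).sum := by
  induction s using Multiset.induction_on with
  | empty => simp
  | cons a s ih =>
    simp only [← Multiset.countP_eq_card_filter, Multiset.map_cons, Multiset.sum_cons,
      Multiset.countP_cons] at *
    rw [Finset.sum_add_distrib, ih, Finset.card_filter, add_comm]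

private lemma map_sum_fiber' {α β : Type*} [Fintype β] [DecidableEq β] (s : Multiset α)
    (f : α → β) (g : β → ℕ) :
    (s.map (fun a => g (f a))).sum = ∑ k : β, (s.filter (fun a => f a = k)).card * g k := by
  induction s using Multiset.induction_on with
  | empty => simp
  | cons a s ih =>
    simp only [← Multiset.countP_eq_card_filter, Multiset.map_cons, Multiset.sum_cons,
      Multiset.countP_cons] at *
    rw [ih]
    have h1 : ∑ k : β, (Multiset.countP (fun x => f x = k) s + if f a = k then 1 else 0) * g k
        = (∑ k : β, Multiset.countP (fun x => f x = k) s * g k)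
          + ∑ k : β, (if f a = k then 1 else 0) * g k := by
      rw [← Finset.sum_add_distrib]
      exact Finset.sum_congr rfl fun k _ => by ring
    rw [h1]
    have h2 : ∑ k : β, (if f a = k then 1 else 0) * g k = g (f a) := by
      simp [ite_mul]
    rw [h2, add_comm]

/-- necessary condition for a Condorcet winner given a position matrix. -/
theorem condorcet_necessary_condition (m n : ℕ) (X : Fin m → Fin m → ℕ)
    (hrow : ∀ i : Fin m, ∑ j, X i j = n)
    (hcol : ∀ j : Fin m, ∑ i, X i j = n)
    (votes : Multiset (Equiv.Perm (Fin m))) (hn : Multiset.card votes = n)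
    (hreal : ∀ i j : Fin m, (votes.filter (fun v => v i = j)).card = X i j)
    (c : Fin m) (hcw : CondorcetWinner m votes c) :
    ∀ i : Fin m, ∀ S : Finset (Fin m), c ∉ S →
      (∑ j ∈ S, ∑ k ∈ Finset.univ.filter (fun k : Fin m => k ≤ i), X k j)
        ≤ S.card * ((n - 1) / 2) +
          ∑ k ∈ Finset.univ.filter (fun k : Fin m => k < i),
            X k c * min S.card ((i : ℕ) - (k : ℕ)) := by
  intro i S hcS
  classical
  -- Step 1: the inner sum counts votes ranking j at position ≤ i
  have h1 : ∀ j : Fin m, ∑ k ∈ Finset.univ.filter (fun k : Fin m => k ≤ i), X k j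
      = (votes.filter (fun v => v.symm j ≤ i)).card := by
    intro j
    have hmem := card_filter_mem' votes (fun v => v.symm j)
      (Finset.univ.filter (fun k : Fin m => k ≤ i))
    have hpred : votes.filter
        (fun v => v.symm j ∈ Finset.univ.filter (fun k : Fin m => k ≤ i))
        = votes.filter (fun v => v.symm j ≤ i) :=
      Multiset.filter_congr (fun v _ => by simp)
    rw [hpred] at hmem
    rw [hmem]
    refine Finset.sum_congr rfl fun k _ => ?_
    rw [← hreal k j]
    refine congrArg _ (Multiset.filter_congr fun v _ => ?_)
    simp only [Equiv.symm_apply_eq, eq_comm]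
    constructor <;> (rintro rfl; simp)
  -- Step 2: split by whether j is ranked above or below c
  have h2 : ∀ j ∈ S, (votes.filter (fun v => v.symm j ≤ i)).card
      = (votes.filter (fun v => v.symm j < v.symm c ∧ v.symm j ≤ i)).card
        + (votes.filter (fun v => v.symm c < v.symm j ∧ v.symm j ≤ i)).card := by
    intro j hj
    have hjc : j ≠ c := fun h => hcS (h ▸ hj)
    have hsplit := Multiset.filter_add_not
      (fun v : Equiv.Perm (Fin m) => v.symm j < v.symm c)
      (votes.filter (fun v => v.symm j ≤ i))
    rw [Multiset.filter_filter, Multiset.filter_filter] at hsplit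
    have hcongr : votes.filter (fun v => ¬ v.symm j < v.symm c ∧ v.symm j ≤ i)
        = votes.filter (fun v => v.symm c < v.symm j ∧ v.symm j ≤ i) := by
      refine Multiset.filter_congr fun v _ => ?_
      have hne : v.symm c ≠ v.symm j := fun h => hjc (v.symm.injective h).symm
      constructor
      · rintro ⟨h, h'⟩; exact ⟨lt_of_le_of_ne (not_lt.mp h) hne, h'⟩
      · rintro ⟨h, h'⟩; exact ⟨h.asymm, h'⟩
    rw [hcongr] at hsplit
    have := congrArg Multiset.card hsplit
    rw [Multiset.card_add] at this
    omega
  -- Step 3: bound on votes ranking j above c (Condorcet)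
  have h3 : ∀ j ∈ S, (votes.filter (fun v => v.symm j < v.symm c ∧ v.symm j ≤ i)).card
      ≤ (n - 1) / 2 := by
    intro j hj
    have hjc : j ≠ c := fun h => hcS (h ▸ hj)
    have hcw' := hcw j hjc
    rw [hn] at hcw'
    have hb : (votes.filter (fun v => v.symm j < v.symm c)).card
        + (votes.filter (fun v => v.symm c < v.symm j)).card = n := by
      have hsplit := Multiset.filter_add_not
        (fun v : Equiv.Perm (Fin m) => v.symm c < v.symm j) votes
      have hcongr : votes.filter (fun v => ¬ v.symm c < v.symm j)
          = votes.filter (fun v => v.symm j < v.symm c) := by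
        refine Multiset.filter_congr fun v _ => ?_
        have hne : v.symm j ≠ v.symm c := fun h => hjc (v.symm.injective h)
        constructor
        · intro h; exact lt_of_le_of_ne (not_lt.mp h) hne
        · intro h; exact h.asymm
      rw [hcongr] at hsplit
      have := congrArg Multiset.card hsplit
      rw [Multiset.card_add, hn] at this
      omega
    have hmono : (votes.filter (fun v => v.symm j < v.symm c ∧ v.symm j ≤ i)).card
        ≤ (votes.filter (fun v => v.symm j < v.symm c)).card :=
      Multiset.card_le_card (Multiset.monotone_filter_right votes (fun v h => h.1))
    omega
  -- Step 4: swap the sums for the second part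
  have h4 : ∑ j ∈ S, (votes.filter (fun v => v.symm c < v.symm j ∧ v.symm j ≤ i)).card
      = (votes.map (fun v =>
          (S.filter (fun j => v.symm c < v.symm j ∧ v.symm j ≤ i)).card)).sum :=
    sum_card_filter' votes S (fun j v => v.symm c < v.symm j ∧ v.symm j ≤ i)
  -- Step 5: per-vote bound
  have h5 : ∀ v ∈ votes, (S.filter (fun j => v.symm c < v.symm j ∧ v.symm j ≤ i)).card
      ≤ min S.card ((i : ℕ) - ((v.symm c : Fin m) : ℕ)) := by
    intro v _
    refine le_min (Finset.card_filter_le _ _) ?_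
    have hle : (S.filter (fun j => v.symm c < v.symm j ∧ v.symm j ≤ i)).card
        ≤ (Finset.Ioc (v.symm c) i).card := by
      apply Finset.card_le_card_of_injOn (fun j => v.symm j)
      · intro j hj
        simp only [Finset.mem_coe, Finset.coe_filter, Finset.mem_filter, Set.mem_setOf_eq] at hj
        simp [Finset.mem_Ioc, hj.2.1, hj.2.2]
      · intro a _ b _ h
        exact v.symm.injective h
    simpa [Fin.card_Ioc] using hle
  -- Step 6: group by position of c
  have h6 : (votes.map (fun v => min S.card ((i : ℕ) - ((v.symm c : Fin m) : ℕ)))).sum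
      = ∑ k : Fin m, (votes.filter (fun v => v.symm c = k)).card
          * min S.card ((i : ℕ) - (k : ℕ)) :=
    map_sum_fiber' votes (fun v => v.symm c) (fun k => min S.card ((i : ℕ) - (k : ℕ)))
  have h7 : ∀ k : Fin m, (votes.filter (fun v => v.symm c = k)).card = X k c := by
    intro k
    rw [← hreal k c]
    refine congrArg _ (Multiset.filter_congr fun v _ => ?_)
    simp only [Equiv.symm_apply_eq, eq_comm]
    constructor <;> (rintro rfl; simp)
  have h8 : ∑ k : Fin m, X k c * min S.card ((i : ℕ) - (k : ℕ))
      = ∑ k ∈ Finset.univ.filter (fun k : Fin m => k < i),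
          X k c * min S.card ((i : ℕ) - (k : ℕ)) := by
    rw [Finset.sum_filter]
    refine Finset.sum_congr rfl fun k _ => ?_
    by_cases h : k < i
    · simp [h]
    · have hik : (i : ℕ) ≤ (k : ℕ) := Fin.le_def.mp (not_lt.mp h)
      simp [h, Nat.sub_eq_zero_of_le hik]
  -- Assemble
  have hB : ∑ j ∈ S, (votes.filter (fun v => v.symm j < v.symm c ∧ v.symm j ≤ i)).card
      ≤ S.card * ((n - 1) / 2) := by
    calc ∑ j ∈ S, (votes.filter (fun v => v.symm j < v.symm c ∧ v.symm j ≤ i)).card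
        ≤ ∑ _j ∈ S, (n - 1) / 2 := Finset.sum_le_sum h3
      _ = S.card * ((n - 1) / 2) := by simp [Finset.sum_const, smul_eq_mul]
  have hC : ∑ j ∈ S, (votes.filter (fun v => v.symm c < v.symm j ∧ v.symm j ≤ i)).card
      ≤ ∑ k ∈ Finset.univ.filter (fun k : Fin m => k < i),
          X k c * min S.card ((i : ℕ) - (k : ℕ)) := by
    rw [h4]
    calc (votes.map (fun v =>
            (S.filter (fun j => v.symm c < v.symm j ∧ v.symm j ≤ i)).card)).sum
        ≤ (votes.map (fun v => min S.card ((i : ℕ) - ((v.symm c : Fin m) : ℕ)))).sum :=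
          Multiset.sum_map_le_sum_map _ _ h5
      _ = ∑ k : Fin m, (votes.filter (fun v => v.symm c = k)).card
            * min S.card ((i : ℕ) - (k : ℕ)) := h6
      _ = ∑ k : Fin m, X k c * min S.card ((i : ℕ) - (k : ℕ)) :=
          Finset.sum_congr rfl fun k _ => by rw [h7]
      _ = _ := h8
  calc ∑ j ∈ S, ∑ k ∈ Finset.univ.filter (fun k : Fin m => k ≤ i), X k j
      = ∑ j ∈ S, ((votes.filter (fun v => v.symm j < v.symm c ∧ v.symm j ≤ i)).card
          + (votes.filter (fun v => v.symm c < v.symm j ∧ v.symm j ≤ i)).card) :=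
        Finset.sum_congr rfl fun j hj => by rw [h1 j, h2 j hj]
    _ = (∑ j ∈ S, (votes.filter (fun v => v.symm j < v.symm c ∧ v.symm j ≤ i)).card)
          + ∑ j ∈ S, (votes.filter (fun v => v.symm c < v.symm j ∧ v.symm j ≤ i)).card :=
        Finset.sum_add_distrib
    _ ≤ _ := add_le_add hB hC
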